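/- arXiv:1911.07087 — 4 statements merged into one kernel-verified Lean document; each statement's English description precedes it below -/
import Mathlib

section
/- Suppose the n × (m+1) matrix A = (a_{ij}) has rank m+1, so that ℓ is strictly concave and has a unique maximizer p̃ on {p ∈ 𝕊_m : a_iᵀp > 0 for all i}. Define the iteration p_j^{[s+1]} = p_j^{[s]} · Ψ_j(p^{[s]}) for j = 0,…,m and s = 0,1,2,…. If the starting point p^{[0]} lies in the interior of 𝕊_m (all coordinates strictly positive), then every iterate p^{[s]} lies in 𝕊_m and the sequence p^{[s]} converges to p̃ as s → ∞. -/
open Finset Filter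

lemma inj_of_rank (n m : ℕ) (a : Fin n → Fin (m + 1) → ℝ)
    (hrank : (Matrix.of a).rank = m + 1) :
    ∀ p q : Fin (m+1) → ℝ, (∀ i, ∑ j, a i j * p j = ∑ j, a i j * q j) → p = q := by
  have hker : LinearMap.ker (Matrix.of a).mulVecLin = ⊥ := by
    have h1 := LinearMap.finrank_range_add_finrank_ker (Matrix.of a).mulVecLin
    rw [Module.finrank_pi, Fintype.card_fin] at h1
    have : Module.finrank ℝ (LinearMap.range (Matrix.of a).mulVecLin) = m + 1 := hrank
    have h0 : Module.finrank ℝ (LinearMap.ker (Matrix.of a).mulVecLin) = 0 := by omega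
    exact Submodule.finrank_eq_zero.mp h0
  have hinj : Function.Injective (Matrix.of a).mulVecLin := LinearMap.ker_eq_bot.mp hker
  intro p q h
  apply hinj
  funext i
  simpa [Matrix.mulVecLin, Matrix.mulVec, dotProduct] using h i

lemma klnonneg {m : ℕ} (pt p : Fin (m+1) → ℝ)
    (hpt_nonneg : ∀ j, 0 ≤ pt j) (hpt_sum : ∑ j, pt j = 1)
    (hp : ∀ j, 0 < p j) (hpsum : ∑ j, p j = 1) :
    0 ≤ ∑ j, pt j * Real.log (pt j / p j) := by
  classical
  set t : Finset (Fin (m+1)) := Finset.univ.filter (fun j => 0 < pt j) with ht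
  have hsplit : ∑ j, pt j * Real.log (pt j / p j) = ∑ j ∈ t, pt j * Real.log (pt j / p j) := by
    rw [← Finset.sum_filter_add_sum_filter_not Finset.univ (fun j => 0 < pt j)]
    have : ∑ j ∈ Finset.univ.filter (fun j => ¬ 0 < pt j), pt j * Real.log (pt j / p j) = 0 := by
      apply Finset.sum_eq_zero
      intro j hj
      have : pt j = 0 := le_antisymm (not_lt.mp (Finset.mem_filter.mp hj).2) (hpt_nonneg j)
      simp [this]
    rw [this, add_zero]
  rw [hsplit]
  have hbound : ∀ j ∈ t, pt j - p j ≤ pt j * Real.log (pt j / p j) := by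
    intro j hj
    have hjpos : 0 < pt j := (Finset.mem_filter.mp hj).2
    have h1 : Real.log (p j / pt j) ≤ p j / pt j - 1 :=
      Real.log_le_sub_one_of_pos (div_pos (hp j) hjpos)
    have h2 : Real.log (pt j / p j) = - Real.log (p j / pt j) := by
      rw [← Real.log_inv]
      congr 1
      rw [inv_div]
    rw [h2]
    have h3 : pt j * (p j / pt j - 1) = p j - pt j := by
      field_simp
    nlinarith [h1, hjpos]
  calc (0:ℝ) ≤ ∑ j ∈ t, (pt j - p j) := by
        rw [Finset.sum_sub_distrib]
        have h4 : ∑ j ∈ t, pt j = 1 := by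
          rw [Finset.sum_subset (Finset.subset_univ t) (fun j _ hj =>
            le_antisymm (not_lt.mp (fun h => hj (Finset.mem_filter.mpr ⟨Finset.mem_univ j, h⟩))) (hpt_nonneg j))]
          exact hpt_sum
        have h5 : ∑ j ∈ t, p j ≤ 1 := by
          rw [← hpsum]
          apply Finset.sum_le_sum_of_subset_of_nonneg (Finset.subset_univ t)
          intro j _ _
          exact (hp j).le
        linarith
    _ ≤ ∑ j ∈ t, pt j * Real.log (pt j / p j) := Finset.sum_le_sum hbound
section
variable {n m : ℕ} (a : Fin n → Fin (m + 1) → ℝ)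



lemma dot_pos (ha_nonneg : ∀ i j, 0 ≤ a i j) (ha_ne : ∀ i, a i ≠ 0)
    {p : Fin (m+1) → ℝ} (hp : ∀ j, 0 < p j) (i : Fin n) :
    0 < ∑ j, a i j * p j := by
  obtain ⟨j, hj⟩ : ∃ j, a i j ≠ 0 := by
    by_contra h
    push_neg at h
    exact ha_ne i (funext h)
  have hj' : 0 < a i j := (ha_nonneg i j).lt_of_ne (Ne.symm hj)
  exact Finset.sum_pos' (fun k _ => mul_nonneg (ha_nonneg i k) (hp k).le)
    ⟨j, Finset.mem_univ j, mul_pos hj' (hp j)⟩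

lemma col_ne (hrank : (Matrix.of a).rank = m + 1) (j : Fin (m+1)) :
    ∃ i, a i j ≠ 0 := by
  by_contra h
  push_neg at h
  have := inj_of_rank n m a hrank (Pi.single j 1) 0 (by
    intro i
    rw [Finset.sum_eq_single j]
    · simp [h i]
    · intro k _ hk; simp [Pi.single_apply, hk]
    · simp)
  simpa [Pi.single_apply] using congrFun this j

lemma iter_pos (hn : 1 ≤ n) (ha_nonneg : ∀ i j, 0 ≤ a i j) (ha_ne : ∀ i, a i ≠ 0)
    (hrank : (Matrix.of a).rank = m + 1)
    (seq : ℕ → Fin (m + 1) → ℝ)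
    (hseq0_pos : ∀ j, 0 < seq 0 j) (hseq0_sum : ∑ j, seq 0 j = 1)
    (hseq : ∀ s j, seq (s + 1) j =
        seq s j * ((1 / (n : ℝ)) * ∑ i, a i j / (∑ k, a i k * seq s k))) :
    ∀ s, (∀ j, 0 < seq s j) ∧ ∑ j, seq s j = 1 := by
  intro s
  induction s with
  | zero => exact ⟨hseq0_pos, hseq0_sum⟩
  | succ s ih =>
    obtain ⟨hpos, hsum⟩ := ih
    have hdot : ∀ i, 0 < ∑ k, a i k * seq s k := dot_pos a ha_nonneg ha_ne hpos
    constructor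
    · intro j
      rw [hseq s j]
      obtain ⟨i₀, hi₀⟩ := col_ne a hrank j
      have hi₀' : 0 < a i₀ j := (ha_nonneg i₀ j).lt_of_ne (Ne.symm hi₀)
      refine mul_pos (hpos j) (mul_pos (by positivity) ?_)
      exact Finset.sum_pos' (fun i _ => div_nonneg (ha_nonneg i j) (hdot i).le)
        ⟨i₀, Finset.mem_univ i₀, div_pos hi₀' (hdot i₀)⟩
    · have : ∑ j, seq (s+1) j
          = (1 / (n:ℝ)) * ∑ i, (∑ j, a i j * seq s j) / (∑ k, a i k * seq s k) := by
        simp only [hseq s]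
        have h1 : ∀ j : Fin (m+1), seq s j * ((1 / (n:ℝ)) * ∑ i, a i j / (∑ k, a i k * seq s k))
            = ∑ i, (1 / (n:ℝ)) * (a i j * seq s j / (∑ k, a i k * seq s k)) := by
          intro j
          rw [Finset.mul_sum, Finset.mul_sum]
          congr 1; funext i; ring
        rw [Finset.sum_congr rfl (fun j _ => h1 j), Finset.sum_comm, Finset.mul_sum]
        congr 1; funext i
        rw [← Finset.mul_sum, ← Finset.sum_div]
      rw [this]
      have : ∀ i ∈ Finset.univ (α := Fin n),
          (∑ j, a i j * seq s j) / (∑ k, a i k * seq s k) = 1 :=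
        fun i _ => div_self (hdot i).ne'
      rw [Finset.sum_congr rfl this]
      simp
      field_simp



lemma kkt (hn : 1 ≤ n) (ha_nonneg : ∀ i j, 0 ≤ a i j)
    (pt : Fin (m + 1) → ℝ)
    (hpt_nonneg : ∀ j, 0 ≤ pt j) (hpt_sum : ∑ j, pt j = 1)
    (hpt_pos : ∀ i, 0 < ∑ j, a i j * pt j)
    (hpt_max : ∀ p : Fin (m + 1) → ℝ, (∀ j, 0 ≤ p j) → (∑ j, p j = 1) →
        (∀ i, 0 < ∑ j, a i j * p j) →
        ∑ i, Real.log (∑ j, a i j * p j) ≤ ∑ i, Real.log (∑ j, a i j * pt j))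
    (j k : Fin (m+1)) (hk : 0 < pt k) :
    ∑ i, a i j / (∑ l, a i l * pt l) ≤ ∑ i, a i k / (∑ l, a i l * pt l) := by
  rcases eq_or_ne j k with rfl | hjk
  · exact le_rfl
  set c : Fin n → ℝ := fun i => ∑ l, a i l * pt l with hc
  set d : Fin n → ℝ := fun i => a i j - a i k with hd
  have hcpos : ∀ i, 0 < c i := hpt_pos
  have hne : (Finset.univ : Finset (Fin n)).Nonempty := by
    have : Nonempty (Fin n) := Fin.pos_iff_nonempty.mp hn
    exact Finset.univ_nonempty
  set δ : ℝ := Finset.univ.inf' hne (fun i => c i / (|d i| + 1)) with hδ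
  have hδpos : 0 < δ := by
    rw [hδ, Finset.lt_inf'_iff]
    intro i _
    have := hcpos i
    positivity
  set t₀ : ℝ := min (pt k) δ with ht₀
  have ht₀pos : 0 < t₀ := lt_min hk hδpos
  set P : ℝ → Fin (m+1) → ℝ := fun t l =>
    pt l + t * ((if l = j then 1 else 0) - (if l = k then 1 else 0)) with hP
  have hdotP : ∀ t i, ∑ l, a i l * P t l = c i + t * d i := by
    intro t i
    simp only [hP, mul_add, Finset.sum_add_distrib]
    congr 1
    have h2 : ∀ l, a i l * (t * ((if l = j then 1 else 0) - (if l = k then 1 else 0)))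
        = t * (a i l * (if l = j then 1 else 0)) - t * (a i l * (if l = k then 1 else 0)) := by
      intro l; ring
    rw [Finset.sum_congr rfl (fun l _ => h2 l), Finset.sum_sub_distrib,
      ← Finset.mul_sum, ← Finset.mul_sum]
    simp [mul_ite, mul_one, mul_zero, Finset.sum_ite_eq', hd]
    ring
  -- dot positivity for small t
  have hdpos : ∀ t, 0 < t → t ≤ t₀ → ∀ i, 0 < c i + t * d i := by
    intro t ht ht' i
    have h1 : t ≤ c i / (|d i| + 1) := le_trans (ht'.trans (min_le_right _ _))
      (Finset.inf'_le _ (Finset.mem_univ i))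
    have h2 : t * (|d i| + 1) ≤ c i := by
      rw [div_eq_mul_inv] at h1
      have : 0 < |d i| + 1 := by positivity
      calc t * (|d i| + 1) ≤ c i * (|d i| + 1)⁻¹ * (|d i| + 1) := by nlinarith
        _ = c i := by field_simp
    have h3 : t * d i ≥ -(t * |d i|) := by
      have := neg_abs_le (d i)
      nlinarith
    nlinarith [abs_nonneg (d i)]
  -- feasibility
  have hfeas : ∀ t, 0 < t → t ≤ t₀ →
      ∑ i, Real.log (c i + t * d i) ≤ ∑ i, Real.log (c i) := by
    intro t ht ht'
    have h1 : ∀ l, 0 ≤ P t l := by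
      intro l
      simp only [hP]
      rcases eq_or_ne l j with rfl | hlj
      · simp [if_neg hjk]
        nlinarith [hpt_nonneg l]
      · rcases eq_or_ne l k with rfl | hlk
        · simp [if_neg (by exact fun h => hjk h.symm : ¬ l = j)]
          have : t ≤ pt l := ht'.trans (min_le_left _ _)
          linarith
        · simp [if_neg hlj, if_neg hlk, hpt_nonneg l]
    have h2 : ∑ l, P t l = 1 := by
      simp only [hP, Finset.sum_add_distrib, ← Finset.mul_sum, Finset.sum_sub_distrib]
      rw [hpt_sum]
      simp [Finset.sum_ite_eq']
    have h3 : ∀ i, 0 < ∑ l, a i l * P t l := by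
      intro i; rw [hdotP]; exact hdpos t ht ht' i
    have := hpt_max (P t) h1 h2 h3
    simpa only [hdotP, ← hc] using this
  -- derivative
  have hderiv : HasDerivAt (fun t => ∑ i, Real.log (c i + t * d i)) (∑ i, d i / c i) 0 := by
    apply HasDerivAt.fun_sum
    intro i _
    have h1 : HasDerivAt (fun t : ℝ => c i + t * d i) (d i) 0 :=
      ((hasDerivAt_mul_const (d i)).const_add (c i))
    have h2 := h1.log (by simp; exact (hcpos i).ne')
    simpa using h2
  -- slope nonpositive
  have hslope : ∀ᶠ t in nhdsWithin (0:ℝ) (Set.Ioi 0),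
      slope (fun t => ∑ i, Real.log (c i + t * d i)) 0 t ≤ 0 := by
    filter_upwards [Ioc_mem_nhdsGT_of_mem (Set.mem_Ico.mpr ⟨le_refl (0:ℝ), ht₀pos⟩)] with t ht
    have e1 : slope (fun t => ∑ i, Real.log (c i + t * d i)) 0 t
        = ((∑ i, Real.log (c i + t * d i)) - ∑ i, Real.log (c i)) / t := by
      rw [slope_def_field]
      simp
    rw [e1]
    apply div_nonpos_of_nonpos_of_nonneg
    · have := hfeas t ht.1 ht.2
      linarith
    · exact ht.1.le
  have htend : Tendsto (slope (fun t => ∑ i, Real.log (c i + t * d i)) 0)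
      (nhdsWithin (0:ℝ) (Set.Ioi 0)) (nhds (∑ i, d i / c i)) := by
    have := hasDerivAt_iff_tendsto_slope.mp hderiv
    exact this.mono_left (nhdsWithin_mono _ (fun x hx => ne_of_gt hx))
  have hS : ∑ i, d i / c i ≤ 0 :=
    le_of_tendsto htend hslope
  have he : ∀ i, d i / c i = a i j / c i - a i k / c i := fun i => sub_div _ _ _
  rw [Finset.sum_congr rfl (fun i _ => he i), Finset.sum_sub_distrib] at hS
  linarith


lemma kkt_eq (hn : 1 ≤ n) (ha_nonneg : ∀ i j, 0 ≤ a i j)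
    (pt : Fin (m + 1) → ℝ)
    (hpt_nonneg : ∀ j, 0 ≤ pt j) (hpt_sum : ∑ j, pt j = 1)
    (hpt_pos : ∀ i, 0 < ∑ j, a i j * pt j)
    (hpt_max : ∀ p : Fin (m + 1) → ℝ, (∀ j, 0 ≤ p j) → (∑ j, p j = 1) →
        (∀ i, 0 < ∑ j, a i j * p j) →
        ∑ i, Real.log (∑ j, a i j * p j) ≤ ∑ i, Real.log (∑ j, a i j * pt j))
    (j : Fin (m+1)) (hj : 0 < pt j) :
    ∑ i, a i j / (∑ l, a i l * pt l) = n := by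
  set S : Fin (m+1) → ℝ := fun j => ∑ i, a i j / (∑ l, a i l * pt l) with hS
  have heq : ∀ l, 0 < pt l → S l = S j := by
    intro l hl
    exact le_antisymm (kkt a hn ha_nonneg pt hpt_nonneg hpt_sum hpt_pos hpt_max l j hj)
      (kkt a hn ha_nonneg pt hpt_nonneg hpt_sum hpt_pos hpt_max j l hl)
  have h1 : ∑ l, pt l * S l = n := by
    rw [hS]
    have : ∀ l : Fin (m+1), pt l * ∑ i, a i l / (∑ k, a i k * pt k)
        = ∑ i, a i l * pt l / (∑ k, a i k * pt k) := by
      intro l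
      rw [Finset.mul_sum]
      congr 1; funext i; ring
    rw [Finset.sum_congr rfl (fun l _ => this l), Finset.sum_comm]
    have : ∀ i : Fin n, (∑ l, a i l * pt l / (∑ k, a i k * pt k)) = 1 := by
      intro i
      rw [← Finset.sum_div]
      exact div_self (hpt_pos i).ne'
    rw [Finset.sum_congr rfl (fun i _ => this i)]
    simp
  have h2 : ∑ l, pt l * S l = S j := by
    have : ∀ l : Fin (m+1), pt l * S l = pt l * S j := by
      intro l
      rcases (hpt_nonneg l).lt_or_eq with hl | hl
      · rw [heq l hl]
      · rw [← hl]; ring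
    rw [Finset.sum_congr rfl (fun l _ => this l), ← Finset.sum_mul, hpt_sum, one_mul]
  show S j = n
  rw [← h2, h1]


lemma keyineq (hn : 1 ≤ n) (ha_nonneg : ∀ i j, 0 ≤ a i j) (ha_ne : ∀ i, a i ≠ 0)
    (pt : Fin (m + 1) → ℝ)
    (hpt_nonneg : ∀ j, 0 ≤ pt j) (hpt_sum : ∑ j, pt j = 1)
    (hpt_pos : ∀ i, 0 < ∑ j, a i j * pt j)
    (hpt_max : ∀ p : Fin (m + 1) → ℝ, (∀ j, 0 ≤ p j) → (∑ j, p j = 1) →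
        (∀ i, 0 < ∑ j, a i j * p j) →
        ∑ i, Real.log (∑ j, a i j * p j) ≤ ∑ i, Real.log (∑ j, a i j * pt j))
    (p : Fin (m + 1) → ℝ) (hp : ∀ j, 0 < p j) :
    (1 / (n:ℝ)) * ((∑ i, Real.log (∑ l, a i l * pt l)) - ∑ i, Real.log (∑ l, a i l * p l))
      ≤ ∑ j, pt j * Real.log ((1 / (n:ℝ)) * ∑ i, a i j / (∑ k, a i k * p k)) := by
  set c : Fin n → ℝ := fun i => ∑ l, a i l * pt l with hc
  set e : Fin n → ℝ := fun i => ∑ l, a i l * p l with he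
  have hcpos : ∀ i, 0 < c i := hpt_pos
  have hepos : ∀ i, 0 < e i := dot_pos a ha_nonneg ha_ne hp
  set b : Fin n → ℝ := fun i => c i / e i with hb
  have hbpos : ∀ i, 0 < b i := fun i => div_pos (hcpos i) (hepos i)
  -- termwise bound
  have hterm : ∀ j : Fin (m+1),
      pt j * ∑ i, (a i j / ((n:ℝ) * c i)) * Real.log (b i)
        ≤ pt j * Real.log ((1 / (n:ℝ)) * ∑ i, a i j / e i) := by
    intro j
    rcases (hpt_nonneg j).lt_or_eq with hj | hj
    · apply mul_le_mul_of_nonneg_left _ (hpt_nonneg j)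
      -- Jensen
      have hw_sum : ∑ i, a i j / ((n:ℝ) * c i) = 1 := by
        have hkkt := kkt_eq a hn ha_nonneg pt hpt_nonneg hpt_sum hpt_pos hpt_max j hj
        have : ∀ i, a i j / ((n:ℝ) * c i) = (1/(n:ℝ)) * (a i j / c i) := by
          intro i; field_simp
        rw [Finset.sum_congr rfl (fun i _ => this i), ← Finset.mul_sum, hkkt]
        have : (0:ℝ) < n := by exact_mod_cast hn
        field_simp
      have hw_nonneg : ∀ i, 0 ≤ a i j / ((n:ℝ) * c i) := by
        intro i
        apply div_nonneg (ha_nonneg i j)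
        have : (0:ℝ) < n := by exact_mod_cast hn
        exact mul_nonneg this.le (hcpos i).le
      have hjensen := strictConcaveOn_log_Ioi.concaveOn.le_map_sum
        (t := Finset.univ) (w := fun i => a i j / ((n:ℝ) * c i)) (p := b)
        (fun i _ => hw_nonneg i) hw_sum (fun i _ => Set.mem_Ioi.mpr (hbpos i))
      have hcomb : ∑ i, (a i j / ((n:ℝ) * c i)) • b i = (1 / (n:ℝ)) * ∑ i, a i j / e i := by
        rw [Finset.mul_sum]
        congr 1; funext i
        rw [smul_eq_mul]
        have h1 := (hcpos i).ne'
        have h2 := (hepos i).ne'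
        have h3 : ((n:ℝ)) ≠ 0 := Nat.cast_ne_zero.mpr (by omega)
        rw [hb]
        field_simp
      calc ∑ i, (a i j / ((n:ℝ) * c i)) * Real.log (b i)
          = ∑ i, (a i j / ((n:ℝ) * c i)) • Real.log (b i) := by simp [smul_eq_mul]
        _ ≤ Real.log (∑ i, (a i j / ((n:ℝ) * c i)) • b i) := hjensen
        _ = Real.log ((1 / (n:ℝ)) * ∑ i, a i j / e i) := by rw [hcomb]
    · rw [← hj]; simp
  calc (1 / (n:ℝ)) * ((∑ i, Real.log (c i)) - ∑ i, Real.log (e i))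
      = ∑ j, pt j * ∑ i, (a i j / ((n:ℝ) * c i)) * Real.log (b i) := by
        have h1 : ∀ j : Fin (m+1), pt j * ∑ i, (a i j / ((n:ℝ) * c i)) * Real.log (b i)
            = ∑ i, (a i j * pt j) * (Real.log (b i) / ((n:ℝ) * c i)) := by
          intro j
          rw [Finset.mul_sum]
          congr 1; funext i; ring
        rw [Finset.sum_congr rfl (fun j _ => h1 j), Finset.sum_comm]
        have h2 : ∀ i : Fin n, ∑ j, (a i j * pt j) * (Real.log (b i) / ((n:ℝ) * c i))
            = (1/(n:ℝ)) * Real.log (b i) := by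
          intro i
          rw [← Finset.sum_mul]
          have hci : ∑ l, a i l * pt l = c i := rfl
          rw [hci]
          have hcne := (hcpos i).ne'
          have hnne : ((n:ℝ)) ≠ 0 := Nat.cast_ne_zero.mpr (by omega)
          field_simp
        rw [Finset.sum_congr rfl (fun i _ => h2 i), ← Finset.mul_sum]
        congr 1
        rw [← Finset.sum_sub_distrib]
        congr 1; funext i
        rw [hb, Real.log_div (hcpos i).ne' (hepos i).ne']
    _ ≤ ∑ j, pt j * Real.log ((1 / (n:ℝ)) * ∑ i, a i j / e i) :=
        Finset.sum_le_sum (fun j _ => hterm j)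


lemma L_tendsto (hn : 1 ≤ n) (ha_nonneg : ∀ i j, 0 ≤ a i j) (ha_ne : ∀ i, a i ≠ 0)
    (hrank : (Matrix.of a).rank = m + 1)
    (pt : Fin (m + 1) → ℝ)
    (hpt_nonneg : ∀ j, 0 ≤ pt j) (hpt_sum : ∑ j, pt j = 1)
    (hpt_pos : ∀ i, 0 < ∑ j, a i j * pt j)
    (hpt_max : ∀ p : Fin (m + 1) → ℝ, (∀ j, 0 ≤ p j) → (∑ j, p j = 1) →
        (∀ i, 0 < ∑ j, a i j * p j) →
        ∑ i, Real.log (∑ j, a i j * p j) ≤ ∑ i, Real.log (∑ j, a i j * pt j))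
    (seq : ℕ → Fin (m + 1) → ℝ)
    (hseq0_pos : ∀ j, 0 < seq 0 j) (hseq0_sum : ∑ j, seq 0 j = 1)
    (hseq : ∀ s j, seq (s + 1) j =
        seq s j * ((1 / (n : ℝ)) * ∑ i, a i j / (∑ k, a i k * seq s k))) :
    Tendsto (fun s => ∑ i, Real.log (∑ l, a i l * seq s l)) atTop
      (nhds (∑ i, Real.log (∑ l, a i l * pt l))) := by
  have hiter := iter_pos a hn ha_nonneg ha_ne hrank seq hseq0_pos hseq0_sum hseq
  set L : (Fin (m+1) → ℝ) → ℝ := fun p => ∑ i, Real.log (∑ l, a i l * p l) with hL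
  set gap : ℕ → ℝ := fun s => L pt - L (seq s) with hgap
  set D : ℕ → ℝ := fun s => ∑ j, pt j * Real.log (pt j / seq s j) with hD
  have hgap_nonneg : ∀ s, 0 ≤ gap s := by
    intro s
    have := hpt_max (seq s) (fun j => (hiter s).1 j |>.le) (hiter s).2
      (dot_pos a ha_nonneg ha_ne (hiter s).1)
    simp only [hgap, hL]
    linarith
  have hD_nonneg : ∀ s, 0 ≤ D s :=
    fun s => klnonneg pt (seq s) hpt_nonneg hpt_sum (hiter s).1 (hiter s).2
  have hstep : ∀ s, gap s ≤ n * (D s - D (s + 1)) := by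
    intro s
    have hkey := keyineq a hn ha_nonneg ha_ne pt hpt_nonneg hpt_sum hpt_pos hpt_max
      (seq s) (hiter s).1
    have hDstep : D s - D (s + 1)
        = ∑ j, pt j * Real.log ((1 / (n:ℝ)) * ∑ i, a i j / (∑ k, a i k * seq s k)) := by
      simp only [hD]
      rw [← Finset.sum_sub_distrib]
      congr 1; funext j
      rcases (hpt_nonneg j).lt_or_eq with hj | hj
      · have hpos := (hiter s).1 j
        have hpos' := (hiter (s+1)).1 j
        have hpsi : (0:ℝ) < (1 / (n:ℝ)) * ∑ i, a i j / (∑ k, a i k * seq s k) := by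
          have := hseq s j
          by_contra h
          push_neg at h
          nlinarith [this, hpos, hpos']
        rw [Real.log_div hj.ne' hpos.ne', Real.log_div hj.ne' hpos'.ne', hseq s j,
          Real.log_mul hpos.ne' hpsi.ne']
        ring
      · rw [← hj]; ring
    rw [hDstep]
    have hnpos : (0:ℝ) < n := by exact_mod_cast hn
    calc gap s = n * ((1/(n:ℝ)) * gap s) := by field_simp
      _ ≤ n * (∑ j, pt j * Real.log ((1 / (n:ℝ)) * ∑ i, a i j / (∑ k, a i k * seq s k))) := by
          apply mul_le_mul_of_nonneg_left _ hnpos.le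
          simpa only [hgap, hL] using hkey
  have hpartial : ∀ S : ℕ, ∑ s ∈ Finset.range S, gap s ≤ n * D 0 := by
    intro S
    calc ∑ s ∈ Finset.range S, gap s ≤ ∑ s ∈ Finset.range S, (n:ℝ) * (D s - D (s+1)) :=
          Finset.sum_le_sum (fun s _ => hstep s)
      _ = n * (D 0 - D S) := by rw [← Finset.mul_sum, Finset.sum_range_sub']
      _ ≤ n * D 0 := by
          have hnpos : (0:ℝ) ≤ n := by positivity
          nlinarith [hD_nonneg S]
  have hsummable : Summable gap := summable_of_sum_range_le hgap_nonneg hpartial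
  have hgap0 : Tendsto gap atTop (nhds 0) := hsummable.tendsto_atTop_zero
  have : Tendsto (fun s => L pt - gap s) atTop (nhds (L pt - 0)) :=
    tendsto_const_nhds.sub hgap0
  simp only [sub_zero] at this
  have heq : (fun s => L pt - gap s) = fun s => L (seq s) := by
    funext s; simp [hgap]
  rw [heq] at this
  exact this


theorem stmt_1' (hn : 1 ≤ n)
    (ha_nonneg : ∀ i j, 0 ≤ a i j) (ha_ne : ∀ i, a i ≠ 0)
    (hrank : (Matrix.of a).rank = m + 1)
    (pt : Fin (m + 1) → ℝ)
    (hpt_nonneg : ∀ j, 0 ≤ pt j) (hpt_sum : ∑ j, pt j = 1)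
    (hpt_pos : ∀ i, 0 < ∑ j, a i j * pt j)
    (hpt_max : ∀ p : Fin (m + 1) → ℝ, (∀ j, 0 ≤ p j) → (∑ j, p j = 1) →
        (∀ i, 0 < ∑ j, a i j * p j) →
        ∑ i, Real.log (∑ j, a i j * p j) ≤ ∑ i, Real.log (∑ j, a i j * pt j))
    (seq : ℕ → Fin (m + 1) → ℝ)
    (hseq0_pos : ∀ j, 0 < seq 0 j) (hseq0_sum : ∑ j, seq 0 j = 1)
    (hseq : ∀ s j, seq (s + 1) j =
        seq s j * ((1 / (n : ℝ)) * ∑ i, a i j / (∑ k, a i k * seq s k))) :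
    (∀ s, (∀ j, 0 ≤ seq s j) ∧ ∑ j, seq s j = 1) ∧
      Tendsto seq atTop (nhds pt) := by
  have hiter := iter_pos a hn ha_nonneg ha_ne hrank seq hseq0_pos hseq0_sum hseq
  refine ⟨fun s => ⟨fun j => ((hiter s).1 j).le, (hiter s).2⟩, ?_⟩
  have hLt := L_tendsto a hn ha_nonneg ha_ne hrank pt hpt_nonneg hpt_sum hpt_pos hpt_max
    seq hseq0_pos hseq0_sum hseq
  apply tendsto_of_subseq_tendsto
  intro ns hns
  have hmem : ∀ k, seq (ns k) ∈ stdSimplex ℝ (Fin (m+1)) :=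
    fun k => ⟨fun j => ((hiter (ns k)).1 j).le, (hiter (ns k)).2⟩
  obtain ⟨q, hq, φ, hφ, hconv⟩ := (isCompact_stdSimplex ℝ (Fin (m+1))).tendsto_subseq hmem
  refine ⟨φ, ?_⟩
  have hsub : Tendsto (ns ∘ φ) atTop atTop := hns.comp hφ.tendsto_atTop
  have hLconv : Tendsto (fun k => ∑ i, Real.log (∑ l, a i l * seq (ns (φ k)) l)) atTop
      (nhds (∑ i, Real.log (∑ l, a i l * pt l))) := hLt.comp hsub
  have hcoord : ∀ l, Tendsto (fun k => seq (ns (φ k)) l) atTop (nhds (q l)) := by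
    intro l
    exact (tendsto_pi_nhds.mp hconv) l
  have hdot_conv : ∀ i, Tendsto (fun k => ∑ l, a i l * seq (ns (φ k)) l) atTop
      (nhds (∑ l, a i l * q l)) := by
    intro i
    exact tendsto_finset_sum _ (fun l _ => (hcoord l).const_mul (a i l))
  have hdotq_pos : ∀ i, 0 < ∑ l, a i l * q l := by
    intro i
    rcases (Finset.sum_nonneg (fun l _ => mul_nonneg (ha_nonneg i l) (hq.1 l))).lt_or_eq
      with h | h
    · exact h
    -- boundary case: contradiction
    exfalso
    have h1 : Tendsto (fun k => ∑ l, a i l * seq (ns (φ k)) l) atTop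
        (nhdsWithin 0 {x : ℝ | x ≠ 0}) := by
      apply tendsto_nhdsWithin_of_tendsto_nhds_of_eventually_within
      · rw [h]; exact hdot_conv i
      · exact Eventually.of_forall (fun k =>
          (dot_pos a ha_nonneg ha_ne (hiter (ns (φ k))).1 i).ne')
    have h2 : Tendsto (fun k => Real.log (∑ l, a i l * seq (ns (φ k)) l)) atTop atBot :=
      Real.tendsto_log_nhdsNE_zero.comp h1
    set C : ℝ := ∑ i' ∈ Finset.univ.erase i, Real.log (∑ l, a i' l) with hC
    have hbound : ∀ k, ∑ i', Real.log (∑ l, a i' l * seq (ns (φ k)) l)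
        ≤ Real.log (∑ l, a i l * seq (ns (φ k)) l) + C := by
      intro k
      rw [← Finset.add_sum_erase Finset.univ _ (Finset.mem_univ i)]
      apply add_le_add_right
      apply Finset.sum_le_sum
      intro i' _
      apply Real.log_le_log (dot_pos a ha_nonneg ha_ne (hiter (ns (φ k))).1 i')
      calc ∑ l, a i' l * seq (ns (φ k)) l ≤ ∑ l, a i' l * 1 := by
            apply Finset.sum_le_sum
            intro l _
            apply mul_le_mul_of_nonneg_left _ (ha_nonneg i' l)
            calc seq (ns (φ k)) l ≤ ∑ l', seq (ns (φ k)) l' := by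
                  apply Finset.single_le_sum (fun l' _ => ((hiter (ns (φ k))).1 l').le)
                    (Finset.mem_univ l)
              _ = 1 := (hiter (ns (φ k))).2
        _ = ∑ l, a i' l := by simp
    have h3 : Tendsto (fun k => Real.log (∑ l, a i l * seq (ns (φ k)) l) + C) atTop atBot :=
      tendsto_atBot_add_const_right _ C h2
    have h4 : Tendsto (fun k => ∑ i', Real.log (∑ l, a i' l * seq (ns (φ k)) l)) atTop atBot :=
      tendsto_atBot_mono hbound h3
    exact not_tendsto_atBot_of_tendsto_nhds hLconv h4
  have hLq : ∑ i, Real.log (∑ l, a i l * q l) = ∑ i, Real.log (∑ l, a i l * pt l) := by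
    have hLq_conv : Tendsto (fun k => ∑ i, Real.log (∑ l, a i l * seq (ns (φ k)) l)) atTop
        (nhds (∑ i, Real.log (∑ l, a i l * q l))) := by
      apply tendsto_finset_sum
      intro i _
      exact ((Real.continuousAt_log (hdotq_pos i).ne').tendsto).comp (hdot_conv i)
    exact tendsto_nhds_unique hLq_conv hLconv
  have hq_eq : q = pt := by
    by_contra hne
    have hdiff : ∃ i, ∑ l, a i l * q l ≠ ∑ l, a i l * pt l := by
      by_contra h
      push_neg at h
      exact hne (inj_of_rank n m a hrank q pt h)
    obtain ⟨i₀, hi₀⟩ := hdiff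
    set r : Fin (m+1) → ℝ := fun l => (q l + pt l) / 2 with hr
    have hr_nonneg : ∀ l, 0 ≤ r l := fun l => by
      have := hq.1 l; have := hpt_nonneg l
      simp only [hr]; linarith
    have hr_sum : ∑ l, r l = 1 := by
      simp only [hr]
      rw [← Finset.sum_div, Finset.sum_add_distrib, hq.2, hpt_sum]
      norm_num
    have hdot_r : ∀ i, ∑ l, a i l * r l
        = (1:ℝ)/2 * (∑ l, a i l * q l) + (1:ℝ)/2 * (∑ l, a i l * pt l) := by
      intro i
      rw [Finset.mul_sum, Finset.mul_sum, ← Finset.sum_add_distrib]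
      congr 1; funext l; simp only [hr]; ring
    have hdot_r_pos : ∀ i, 0 < ∑ l, a i l * r l := by
      intro i
      rw [hdot_r]
      have := hdotq_pos i; have := hpt_pos i
      linarith
    have hle : ∀ i : Fin n, (1:ℝ)/2 * Real.log (∑ l, a i l * q l)
        + (1:ℝ)/2 * Real.log (∑ l, a i l * pt l) ≤ Real.log (∑ l, a i l * r l) := by
      intro i
      have := strictConcaveOn_log_Ioi.concaveOn.2 (Set.mem_Ioi.mpr (hdotq_pos i))
        (Set.mem_Ioi.mpr (hpt_pos i)) (by norm_num : (0:ℝ) ≤ 1/2) (by norm_num : (0:ℝ) ≤ 1/2)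
        (by norm_num : (1:ℝ)/2 + 1/2 = 1)
      rw [hdot_r i]
      simpa [smul_eq_mul] using this
    have hlt : (1:ℝ)/2 * Real.log (∑ l, a i₀ l * q l)
        + (1:ℝ)/2 * Real.log (∑ l, a i₀ l * pt l) < Real.log (∑ l, a i₀ l * r l) := by
      have := strictConcaveOn_log_Ioi.2 (Set.mem_Ioi.mpr (hdotq_pos i₀))
        (Set.mem_Ioi.mpr (hpt_pos i₀)) hi₀ (by norm_num : (0:ℝ) < 1/2)
        (by norm_num : (0:ℝ) < 1/2) (by norm_num : (1:ℝ)/2 + 1/2 = 1)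
      rw [hdot_r i₀]
      simpa [smul_eq_mul] using this
    have hsum_lt : ∑ i, ((1:ℝ)/2 * Real.log (∑ l, a i l * q l)
        + (1:ℝ)/2 * Real.log (∑ l, a i l * pt l)) < ∑ i, Real.log (∑ l, a i l * r l) :=
      Finset.sum_lt_sum (fun i _ => hle i) ⟨i₀, Finset.mem_univ i₀, hlt⟩
    have hexp : ∑ i, ((1:ℝ)/2 * Real.log (∑ l, a i l * q l)
        + (1:ℝ)/2 * Real.log (∑ l, a i l * pt l))
        = ∑ i, Real.log (∑ l, a i l * pt l) := by
      rw [Finset.sum_add_distrib, ← Finset.mul_sum, ← Finset.mul_sum, hLq]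
      ring
    have hmax := hpt_max r hr_nonneg hr_sum hdot_r_pos
    rw [hexp] at hsum_lt
    linarith
  rw [hq_eq] at hconv
  exact hconv
end

/-- If the matrix `A = (a i j)` has full column rank `m + 1` (so the
mixture log-likelihood `ℓ(p) = ∑ i, log (aᵢᵀ p)` is strictly concave with a unique
maximizer `pt` on the simplex), then the fixed-point iteration
`p_j^{[s+1]} = p_j^{[s]} Ψ_j(p^{[s]})`, started in the interior of the simplex,
stays in the simplex and converges to `pt`. -/
theorem stmt_1 (n m : ℕ) (hn : 1 ≤ n)
    (a : Fin n → Fin (m + 1) → ℝ)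
    (ha_nonneg : ∀ i j, 0 ≤ a i j) (ha_ne : ∀ i, a i ≠ 0)
    (hrank : (Matrix.of a).rank = m + 1)
    (pt : Fin (m + 1) → ℝ)
    (hpt_nonneg : ∀ j, 0 ≤ pt j) (hpt_sum : ∑ j, pt j = 1)
    (hpt_pos : ∀ i, 0 < ∑ j, a i j * pt j)
    (hpt_max : ∀ p : Fin (m + 1) → ℝ, (∀ j, 0 ≤ p j) → (∑ j, p j = 1) →
        (∀ i, 0 < ∑ j, a i j * p j) →
        ∑ i, Real.log (∑ j, a i j * p j) ≤ ∑ i, Real.log (∑ j, a i j * pt j))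
    (seq : ℕ → Fin (m + 1) → ℝ)
    (hseq0_pos : ∀ j, 0 < seq 0 j) (hseq0_sum : ∑ j, seq 0 j = 1)
    (hseq : ∀ s j, seq (s + 1) j =
        seq s j * ((1 / (n : ℝ)) * ∑ i, a i j / (∑ k, a i k * seq s k))) :
    (∀ s, (∀ j, 0 ≤ seq s j) ∧ ∑ j, seq s j = 1) ∧
      Tendsto seq atTop (nhds pt) := by
  exact stmt_1' a hn ha_nonneg ha_ne hrank pt hpt_nonneg hpt_sum hpt_pos hpt_max
    seq hseq0_pos hseq0_sum hseq
end

section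
/- Let p̃ lie in the interior of 𝕊_m with a_iᵀp̃ > 0 for all i and Ψ_j(p̃) = 1 for all j, and let Q = −(1/n) · diag(p̃) · ∇²ℓ(p̃). Equip the subspace ℤ_m = {z ∈ ℝ^{m+1} : Σ_j z_j = 0} with the inner product ⟨u,v⟩ = Σ_{j=0}^m u_j v_j / p̃_j. Then Q restricted to ℤ_m is self-adjoint and positive semidefinite with respect to ⟨·,·⟩, every eigenvalue of Q associated with an eigenvector in ℤ_m lies in the interval [0,1], and if ∇²ℓ(p̃) is negative definite then the smallest such eigenvalue is strictly positive. -/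
open Finset

/-- With `pt` interior to the simplex, `Ψ_j(pt) = 1` for all `j`,
and `Q = -(1/n) diag(pt) ∇²ℓ(pt)`, equip `Z_m = {z : ∑ j, z j = 0}` with the
inner product `⟨u, v⟩ = ∑ j, u j * v j / pt j`. Then `Q` is self-adjoint and
positive semidefinite on `Z_m` w.r.t. this inner product, every eigenvalue of
`Q` with eigenvector in `Z_m` lies in `[0, 1]`, and if `∇²ℓ(pt)` is negative
definite then every such eigenvalue is strictly positive. -/
theorem stmt_6 (n m : ℕ) (hn : 1 ≤ n)
    (a : Fin n → Fin (m + 1) → ℝ)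
    (ha_nonneg : ∀ i j, 0 ≤ a i j) (ha_ne : ∀ i, a i ≠ 0)
    (pt : Fin (m + 1) → ℝ)
    (hpt_pos : ∀ j, 0 < pt j) (hpt_sum : ∑ j, pt j = 1)
    (hdot_pos : ∀ i, 0 < ∑ j, a i j * pt j)
    (hΨ : ∀ j, (1 / (n : ℝ)) * ∑ i, a i j / (∑ k, a i k * pt k) = 1)
    (H Q : Matrix (Fin (m + 1)) (Fin (m + 1)) ℝ)
    (hH : ∀ j k, H j k = -(∑ i, a i j * a i k / (∑ l, a i l * pt l) ^ 2))
    (hQ : ∀ j k, Q j k = (pt j / n) * ∑ i, a i j * a i k / (∑ l, a i l * pt l) ^ 2) :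
    (∀ u v : Fin (m + 1) → ℝ, (∑ j, u j = 0) → (∑ j, v j = 0) →
        ∑ j, (Q.mulVec u) j * v j / pt j = ∑ j, u j * (Q.mulVec v) j / pt j) ∧
    (∀ u : Fin (m + 1) → ℝ, (∑ j, u j = 0) → 0 ≤ ∑ j, u j * (Q.mulVec u) j / pt j) ∧
    (∀ (lam : ℝ) (z : Fin (m + 1) → ℝ), (∑ j, z j = 0) → z ≠ 0 →
        Q.mulVec z = lam • z → 0 ≤ lam ∧ lam ≤ 1) ∧
    ((-H).PosDef → ∀ (lam : ℝ) (z : Fin (m + 1) → ℝ), (∑ j, z j = 0) → z ≠ 0 →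
        Q.mulVec z = lam • z → 0 < lam) := by
  have hnR : (0 : ℝ) < n := by
    have : (1 : ℝ) ≤ n := by exact_mod_cast hn
    linarith
  -- the action of Q
  have hmul : ∀ (u : Fin (m + 1) → ℝ) (j : Fin (m + 1)),
      Q.mulVec u j
        = pt j / n * ∑ i, a i j * (∑ k, a i k * u k) / (∑ l, a i l * pt l) ^ 2 := by
    intro u j
    simp only [Matrix.mulVec, dotProduct, hQ, Finset.mul_sum, Finset.sum_mul,
      Finset.sum_div]
    rw [Finset.sum_comm]
    exact Finset.sum_congr rfl fun i _ => Finset.sum_congr rfl fun k _ => by ring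
  -- key bilinear identity
  have key : ∀ u v : Fin (m + 1) → ℝ,
      ∑ j, Q.mulVec u j * v j / pt j
        = (1 / (n : ℝ)) * ∑ i,
            (∑ k, a i k * u k) * (∑ k, a i k * v k) / (∑ l, a i l * pt l) ^ 2 := by
    intro u v
    have step : ∀ j, Q.mulVec u j * v j / pt j
        = ∑ i, (1 / (n : ℝ)) *
            ((∑ k, a i k * u k) * (a i j * v j) / (∑ l, a i l * pt l) ^ 2) := by
      intro j
      rw [hmul, Finset.mul_sum, Finset.sum_mul, Finset.sum_div]
      refine Finset.sum_congr rfl fun i _ => ?_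
      have hpj : pt j ≠ 0 := (hpt_pos j).ne'
      have hn0 : (n : ℝ) ≠ 0 := hnR.ne'
      have hC : (∑ l, a i l * pt l) ≠ 0 := (hdot_pos i).ne'
      field_simp
    rw [Finset.sum_congr rfl fun j _ => step j, Finset.sum_comm, Finset.mul_sum]
    refine Finset.sum_congr rfl fun i _ => ?_
    rw [← Finset.mul_sum]
    congr 1
    rw [← Finset.sum_div, ← Finset.mul_sum]
  have key' : ∀ u v : Fin (m + 1) → ℝ,
      ∑ j, u j * Q.mulVec v j / pt j
        = (1 / (n : ℝ)) * ∑ i,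
            (∑ k, a i k * u k) * (∑ k, a i k * v k) / (∑ l, a i l * pt l) ^ 2 := by
    intro u v
    rw [show (∑ j, u j * Q.mulVec v j / pt j) = ∑ j, Q.mulVec v j * u j / pt j from
      Finset.sum_congr rfl fun j _ => by ring, key]
    congr 1
    exact Finset.sum_congr rfl fun i _ => by ring
  -- Cauchy–Schwarz consequence: upper bound on the quadratic form
  have hub : ∀ z : Fin (m + 1) → ℝ,
      (1 / (n : ℝ)) * ∑ i,
          (∑ k, a i k * z k) * (∑ k, a i k * z k) / (∑ l, a i l * pt l) ^ 2
        ≤ ∑ j, z j * z j / pt j := by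
    intro z
    have hCS : ∀ i, (∑ k, a i k * z k) * (∑ k, a i k * z k) / (∑ l, a i l * pt l) ^ 2
        ≤ (∑ j, a i j * z j ^ 2 / pt j) / (∑ l, a i l * pt l) := by
      intro i
      have hc := hdot_pos i
      have cs : (∑ k, a i k * z k) ^ 2
          ≤ (∑ l, a i l * pt l) * ∑ j, a i j * z j ^ 2 / pt j := by
        refine Finset.sum_sq_le_sum_mul_sum_of_sq_eq_mul Finset.univ
          (fun j _ => mul_nonneg (ha_nonneg i j) (hpt_pos j).le)
          (fun j _ => div_nonneg (mul_nonneg (ha_nonneg i j) (sq_nonneg _)) (hpt_pos j).le)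
          (fun j _ => ?_)
        have hpj : pt j ≠ 0 := (hpt_pos j).ne'
        field_simp
      calc (∑ k, a i k * z k) * (∑ k, a i k * z k) / (∑ l, a i l * pt l) ^ 2
          = (∑ k, a i k * z k) ^ 2 / (∑ l, a i l * pt l) ^ 2 := by ring
        _ ≤ ((∑ l, a i l * pt l) * ∑ j, a i j * z j ^ 2 / pt j)
              / (∑ l, a i l * pt l) ^ 2 := by
            exact div_le_div_of_nonneg_right cs (by positivity) |>.trans_eq rfl
        _ = (∑ j, a i j * z j ^ 2 / pt j) / (∑ l, a i l * pt l) := by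
            field_simp
    calc (1 / (n : ℝ)) * ∑ i,
            (∑ k, a i k * z k) * (∑ k, a i k * z k) / (∑ l, a i l * pt l) ^ 2
        ≤ (1 / (n : ℝ)) * ∑ i, (∑ j, a i j * z j ^ 2 / pt j) / (∑ l, a i l * pt l) := by
          refine mul_le_mul_of_nonneg_left (Finset.sum_le_sum fun i _ => hCS i) (by positivity)
      _ = ∑ j, (z j ^ 2 / pt j) * ((1 / (n : ℝ)) * ∑ i, a i j / (∑ k, a i k * pt k)) := by
          rw [Finset.mul_sum]
          rw [show (∑ i, (1 / (n : ℝ)) * ((∑ j, a i j * z j ^ 2 / pt j) / (∑ l, a i l * pt l)))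
              = ∑ i, ∑ j, (z j ^ 2 / pt j) * ((1 / (n : ℝ)) * (a i j / (∑ k, a i k * pt k)))
            from Finset.sum_congr rfl fun i _ => by
              rw [Finset.sum_div, Finset.mul_sum]
              exact Finset.sum_congr rfl fun j _ => by ring]
          rw [Finset.sum_comm]
          exact Finset.sum_congr rfl fun j _ => by simp only [Finset.mul_sum]
      _ = ∑ j, z j * z j / pt j := by
          refine Finset.sum_congr rfl fun j _ => ?_
          rw [hΨ j, mul_one, sq]
  -- positivity of the norm
  have hnorm : ∀ z : Fin (m + 1) → ℝ, z ≠ 0 → 0 < ∑ j, z j * z j / pt j := by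
    intro z hz
    obtain ⟨j0, hj0⟩ : ∃ j, z j ≠ 0 := by
      by_contra h
      push_neg at h
      exact hz (funext fun j => h j)
    refine Finset.sum_pos' (fun j _ => div_nonneg (mul_self_nonneg _) (hpt_pos j).le)
      ⟨j0, Finset.mem_univ _, ?_⟩
    exact div_pos (mul_self_pos.mpr hj0) (hpt_pos j0)
  -- quadratic form is nonneg
  have hqnn : ∀ u : Fin (m + 1) → ℝ, 0 ≤ ∑ j, u j * Q.mulVec u j / pt j := by
    intro u
    rw [key']
    refine mul_nonneg (by positivity) (Finset.sum_nonneg fun i _ => ?_)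
    exact div_nonneg (mul_self_nonneg _) (sq_nonneg _)
  -- eigenvalue computation
  have heig : ∀ (lam : ℝ) (z : Fin (m + 1) → ℝ), Q.mulVec z = lam • z →
      ∑ j, z j * Q.mulVec z j / pt j = lam * ∑ j, z j * z j / pt j := by
    intro lam z hz
    rw [hz, Finset.mul_sum]
    exact Finset.sum_congr rfl fun j _ => by simp [Pi.smul_apply, smul_eq_mul]; ring
  refine ⟨fun u v _ _ => by rw [key, key'], fun u _ => hqnn u, ?_, ?_⟩
  · intro lam z _ hz0 hev
    have hN := hnorm z hz0
    have he := heig lam z hev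
    constructor
    · have := hqnn z
      rw [he] at this
      nlinarith [this, hN]
    · have hle : lam * ∑ j, z j * z j / pt j ≤ ∑ j, z j * z j / pt j := by
        rw [← he, key']
        exact hub z
      nlinarith
  · intro hPD lam z _ hz0 hev
    have hN := hnorm z hz0
    have he := heig lam z hev
    -- relate Q and -H
    have hQH : ∀ j, Q.mulVec z j = pt j / n * ((-H).mulVec z) j := by
      intro j
      simp only [Matrix.mulVec, dotProduct, Matrix.neg_apply, hQ, hH, neg_neg]
      rw [Finset.mul_sum]
      exact Finset.sum_congr rfl fun k _ => by ring
    have hpos : 0 < dotProduct z ((-H).mulVec z) := by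
      have := hPD.dotProduct_mulVec_pos hz0
      simpa using this
    have hdot : dotProduct z ((-H).mulVec z)
        = (n : ℝ) * ∑ j, z j * Q.mulVec z j / pt j := by
      rw [Finset.mul_sum]
      refine Finset.sum_congr rfl fun j _ => ?_
      rw [hQH j]
      have hpj : pt j ≠ 0 := (hpt_pos j).ne'
      field_simp
    rw [hdot, he] at hpos
    nlinarith [mul_pos hnR hN]
end

section
/- Let b > 0 and let f : [0,b] → ℝ be twice continuously differentiable with f(t) > 0 for all t ∈ [0,b]. Then ∫₀^b [ t·(f'(t))²/f(t) − f'(t) − t·f''(t) ] · t dt = ∫₀^b ( t·f'(t)/f(t) + 1 )² f(t) dt − ( b²·f'(b) + b·f(b) ). -/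
open Set intervalIntegral

/-- Integration-by-parts identity for the uncensored-data term
`I₀` in the limiting Hessian: for `f` twice continuously differentiable and
positive on `[0, b]`,
`∫₀^b [t (f'(t))²/f(t) − f'(t) − t f''(t)] t dt
   = ∫₀^b (t f'(t)/f(t) + 1)² f(t) dt − (b² f'(b) + b f(b))`. -/
theorem stmt_9 (b : ℝ) (hb : 0 < b) (f f' f'' : ℝ → ℝ)
    (hf' : ∀ t ∈ Set.Icc (0 : ℝ) b, HasDerivAt f (f' t) t)
    (hf'' : ∀ t ∈ Set.Icc (0 : ℝ) b, HasDerivAt f' (f'' t) t)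
    (hcont : ContinuousOn f'' (Set.Icc (0 : ℝ) b))
    (hpos : ∀ t ∈ Set.Icc (0 : ℝ) b, 0 < f t) :
    ∫ t in (0 : ℝ)..b, (t * (f' t) ^ 2 / f t - f' t - t * f'' t) * t =
      (∫ t in (0 : ℝ)..b, (t * f' t / f t + 1) ^ 2 * f t)
        - (b ^ 2 * f' b + b * f b) := by
  have huIcc : Set.uIcc (0 : ℝ) b = Set.Icc 0 b := Set.uIcc_of_le hb.le
  set g : ℝ → ℝ := fun t => t ^ 2 * f' t + t * f t with hg_def
  set g' : ℝ → ℝ := fun t => 3 * t * f' t + t ^ 2 * f'' t + f t with hg'_def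
  have hg : ∀ t ∈ Set.uIcc (0 : ℝ) b, HasDerivAt g (g' t) t := by
    intro t ht
    rw [huIcc] at ht
    have h1 : HasDerivAt (fun t : ℝ => t ^ 2 * f' t)
        (2 * t * f' t + t ^ 2 * f'' t) t := by
      have := ((hasDerivAt_pow 2 t).mul (hf'' t ht))
      exact this.congr_deriv (by norm_num)
    have h2 : HasDerivAt (fun t : ℝ => t * f t) (f t + t * f' t) t := by
      have := (hasDerivAt_id t).mul (hf' t ht)
      exact this.congr_deriv (by simp)
    have := h1.add h2
    exact this.congr_deriv (by simp only [hg'_def]; ring)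
  have hfc : ContinuousOn f (Set.Icc 0 b) := fun t ht => (hf' t ht).continuousAt.continuousWithinAt
  have hf'c : ContinuousOn f' (Set.Icc 0 b) := fun t ht => (hf'' t ht).continuousAt.continuousWithinAt
  have hg'c : ContinuousOn g' (Set.Icc 0 b) := by
    apply ContinuousOn.add
    apply ContinuousOn.add
    · exact (continuousOn_const.mul continuousOn_id).mul hf'c
    · exact (continuousOn_id.pow 2).mul hcont
    · exact hfc
  have hg'int : IntervalIntegrable g' MeasureTheory.volume 0 b :=
    (hg'c.mono (by rw [huIcc])).intervalIntegrable
  have hftc : ∫ t in (0 : ℝ)..b, g' t = g b - g 0 :=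
    intervalIntegral.integral_eq_sub_of_hasDerivAt hg hg'int
  have hRc : ContinuousOn (fun t => (t * f' t / f t + 1) ^ 2 * f t) (Set.Icc 0 b) := by
    apply ContinuousOn.mul _ hfc
    apply ContinuousOn.pow
    exact ((continuousOn_id.mul hf'c).div hfc (fun t ht => (hpos t ht).ne')).add continuousOn_const
  have hRint : IntervalIntegrable (fun t => (t * f' t / f t + 1) ^ 2 * f t)
      MeasureTheory.volume 0 b := (hRc.mono (by rw [huIcc])).intervalIntegrable
  have key : ∫ t in (0 : ℝ)..b, (t * (f' t) ^ 2 / f t - f' t - t * f'' t) * t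
      = ∫ t in (0 : ℝ)..b, ((t * f' t / f t + 1) ^ 2 * f t - g' t) := by
    apply intervalIntegral.integral_congr
    intro t ht
    rw [huIcc] at ht
    have hf0 : f t ≠ 0 := (hpos t ht).ne'
    simp only [hg'_def]
    field_simp
    ring
  rw [key, intervalIntegral.integral_sub hRint hg'int, hftc]
  simp only [hg_def]
  ring
end

section
/- Let σ > 0 and κ > 0, and let f(t) = (σ/κ)·(t/κ)^{σ−1}·exp(−(t/κ)^σ) be the Weibull density with shape σ and scale κ. Then for every τ ≥ κ (with τ > 0), τ²·f'(τ) + τ·f(τ) ≤ 0. -/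
/-- For the Weibull density
`f(t) = (σ/κ) (t/κ)^{σ−1} exp(−(t/κ)^σ)` with shape `σ > 0` and scale `κ > 0`,
and any `τ ≥ κ` (with `τ > 0`), the boundary term `τ² f'(τ) + τ f(τ)` is
nonpositive. -/
theorem stmt_12 (σ κ : ℝ) (hσ : 0 < σ) (hκ : 0 < κ)
    (f : ℝ → ℝ)
    (hf : ∀ t : ℝ, f t = (σ / κ) * (t / κ) ^ (σ - 1) * Real.exp (-(t / κ) ^ σ))
    (τ : ℝ) (hτκ : κ ≤ τ) (hτ : 0 < τ) :
    τ ^ 2 * deriv f τ + τ * f τ ≤ 0 := by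
  have hfe : f = fun t => (σ / κ) * (t / κ) ^ (σ - 1) * Real.exp (-(t / κ) ^ σ) :=
    funext hf
  set u : ℝ := τ / κ with hu
  have hu0 : 0 < u := div_pos hτ hκ
  have hu1 : 1 ≤ u := (one_le_div hκ).mpr hτκ
  have h1 : HasDerivAt (fun t : ℝ => t / κ) (1 / κ) τ := by
    simpa using (hasDerivAt_id τ).div_const κ
  have h2 : HasDerivAt (fun t : ℝ => (t / κ) ^ (σ - 1))
      ((σ - 1) * u ^ (σ - 1 - 1) * (1 / κ)) τ := by
    have := (Real.hasDerivAt_rpow_const (x := τ / κ) (p := σ - 1) (Or.inl (ne_of_gt hu0))).comp τ h1; exact this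
  have h3 : HasDerivAt (fun t : ℝ => (t / κ) ^ σ)
      (σ * u ^ (σ - 1) * (1 / κ)) τ := by
    have := (Real.hasDerivAt_rpow_const (x := τ / κ) (p := σ) (Or.inl (ne_of_gt hu0))).comp τ h1; exact this
  have h4 : HasDerivAt (fun t : ℝ => Real.exp (-(t / κ) ^ σ))
      (Real.exp (-u ^ σ) * (-(σ * u ^ (σ - 1) * (1 / κ)))) τ := by
    simpa using (h3.neg).exp
  have h5 : HasDerivAt f
      ((σ / κ) * ((σ - 1) * u ^ (σ - 1 - 1) * (1 / κ)) * Real.exp (-u ^ σ) +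
       (σ / κ) * u ^ (σ - 1) * (Real.exp (-u ^ σ) * (-(σ * u ^ (σ - 1) * (1 / κ))))) τ := by
    rw [hfe]
    exact ((h2.const_mul (σ / κ)).mul h4)
  have hderiv := h5.deriv
  rw [hderiv, hf τ]
  set E := Real.exp (-u ^ σ) with hE
  have hEpos : 0 < E := Real.exp_pos _
  set A := u ^ σ with hA
  have hA1 : 1 ≤ A := Real.one_le_rpow hu1 hσ.le
  have hus1 : u ^ (σ - 1) = A / u := by
    rw [hA, Real.rpow_sub hu0, Real.rpow_one]
  have hus2 : u ^ (σ - 1 - 1) = A / u / u := by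
    rw [hA, Real.rpow_sub hu0, Real.rpow_sub hu0, Real.rpow_one]
  have hτu : τ = κ * u := by rw [hu]; field_simp [ne_of_gt hκ]
  rw [hus1, hus2, hτu]
  have hκ' : κ ≠ 0 := ne_of_gt hκ
  have hu' : u ≠ 0 := ne_of_gt hu0
  have key : (κ * u) ^ 2 * (σ / κ * ((σ - 1) * (A / u / u) * (1 / κ)) * E +
      σ / κ * (A / u) * (E * -(σ * (A / u) * (1 / κ)))) +
      κ * u * (σ / κ * (A / u) * E) = σ * σ * A * E * (1 - A) := by
    field_simp
    ring
  rw [key]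
  have : 1 - A ≤ 0 := by linarith
  have h' : 0 ≤ σ * σ * A * E := by positivity
  exact mul_nonpos_of_nonneg_of_nonpos h' this
end
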